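/- For the linear periodically driven system x' = −x², y' = −y + sin(t)x², the formal power series center manifold H(t,x) = Σ_{n≥2} a_n(t)xⁿ satisfying ∂H/∂t − x²∂H/∂x = −H + sin(t)x² has coefficients a_n(t) = ((n−1)!/2^{(n−1)/2}) sin(t − (n−1)π/4), obtained from a₂(t) = (sin t − cos t)/2 and the recurrence that a_n is the unique 2π-periodic solution of a_n' + a_n = (n−1)a_{n−1}. -/

import Mathlib

open Real

private lemma stmt16_deriv_helper (C θ : ℝ) (t : ℝ) :
    HasDerivAt (fun t => C * Real.sin (t - θ)) (C * Real.cos (t - θ)) t := by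
  have h : HasDerivAt (fun t : ℝ => t - θ) 1 t := (hasDerivAt_id t).sub_const θ
  have := ((Real.hasDerivAt_sin (t - θ)).comp t h).const_mul C
  simpa using this

private lemma stmt16_zero_lemma (d : ℝ → ℝ) (hd : ∀ t, HasDerivAt d (-(d t)) t)
    (hp : ∀ t, d (t + 2 * π) = d t) : ∀ t, d t = 0 := by
  have hg : ∀ t, HasDerivAt (fun t => d t * Real.exp t) 0 t := by
    intro t
    have h := (hd t).mul (Real.hasDerivAt_exp t)
    have h2 : -d t * Real.exp t + d t * Real.exp t = 0 := by ring
    rwa [h2] at h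
  have hc : ∀ s t : ℝ, d s * Real.exp s = d t * Real.exp t :=
    fun s t => is_const_of_deriv_eq_zero (fun x => (hg x).differentiableAt)
      (fun x => (hg x).deriv) s t
  have h0 : d 0 = 0 := by
    by_contra hd0
    have h1 := hc (0 + 2 * π) 0
    rw [hp 0] at h1
    have h2 : Real.exp (0 + 2 * π) = Real.exp 0 := mul_left_cancel₀ hd0 h1
    have := Real.exp_injective h2
    have := Real.pi_pos
    linarith
  intro t
  have h3 := hc t 0
  rw [h0, Real.exp_zero] at h3
  simp only [zero_mul] at h3
  exact (mul_eq_zero.mp h3).resolve_right (Real.exp_ne_zero t)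

open Real in
/-- The coefficients of the formal center manifold expansion of `x' = -x²`,
`y' = -y + sin t · x²`: `a n t = ((n-1)!/2^{(n-1)/2}) sin(t - (n-1)π/4)` satisfies
`a 2 t = (sin t - cos t)/2`, each `a n` is `2π`-periodic, `a 2` is the unique `2π`-periodic
solution of `a' + a = sin`, and for `n ≥ 3`, `a n` is the unique `2π`-periodic solution of
`a' + a = (n-1) a_{n-1}`. -/
theorem stmt_16
    (a : ℕ → ℝ → ℝ)
    (ha : ∀ n : ℕ, 2 ≤ n → ∀ t : ℝ,
      a n t = ((n - 1).factorial : ℝ) / (2 : ℝ) ^ (((n : ℝ) - 1) / 2) *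
        sin (t - ((n : ℝ) - 1) * π / 4)) :
    (∀ t : ℝ, a 2 t = (sin t - cos t) / 2) ∧
    (∀ n : ℕ, 2 ≤ n → ∀ t : ℝ, a n (t + 2 * π) = a n t) ∧
    (∀ t : ℝ, HasDerivAt (a 2) (sin t - a 2 t) t) ∧
    (∀ b : ℝ → ℝ, (∀ t : ℝ, HasDerivAt b (sin t - b t) t) →
      (∀ t : ℝ, b (t + 2 * π) = b t) → b = a 2) ∧
    (∀ n : ℕ, 3 ≤ n → (∀ t : ℝ, HasDerivAt (a n) (((n : ℝ) - 1) * a (n - 1) t - a n t) t) ∧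
      (∀ b : ℝ → ℝ, (∀ t : ℝ, HasDerivAt b (((n : ℝ) - 1) * a (n - 1) t - b t) t) →
        (∀ t : ℝ, b (t + 2 * π) = b t) → b = a n)) := by
  have sqrt2_sq : Real.sqrt 2 ^ 2 = 2 := Real.sq_sqrt (by norm_num)
  have sqrt2_pos : (0:ℝ) < Real.sqrt 2 := Real.sqrt_pos.mpr (by norm_num)
  -- Part 1: explicit formula for a 2
  have h1 : ∀ t : ℝ, a 2 t = (sin t - cos t) / 2 := by
    intro t
    rw [ha 2 le_rfl t]
    norm_num
    rw [← Real.sqrt_eq_rpow, Real.sin_sub, Real.sin_pi_div_four, Real.cos_pi_div_four]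
    have hne : Real.sqrt 2 ≠ 0 := ne_of_gt sqrt2_pos
    field_simp
  -- Part 2: periodicity
  have h2 : ∀ n : ℕ, 2 ≤ n → ∀ t : ℝ, a n (t + 2 * π) = a n t := by
    intro n hn t
    rw [ha n hn, ha n hn]
    congr 1
    rw [show t + 2 * π - ((n:ℝ) - 1) * π / 4 = (t - ((n:ℝ) - 1) * π / 4) + 2 * π by ring,
      Real.sin_add_two_pi]
  -- Part 3: derivative of a 2
  have h3 : ∀ t : ℝ, HasDerivAt (a 2) (sin t - a 2 t) t := by
    intro t
    have he : a 2 = fun t => (sin t - cos t) / 2 := funext h1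
    rw [he]
    have hd : HasDerivAt (fun t => (sin t - cos t) / 2) _ t :=
      ((Real.hasDerivAt_sin t).sub (Real.hasDerivAt_cos t)).div_const 2
    convert hd using 1
    show sin t - (sin t - cos t) / 2 = (cos t - -sin t) / 2
    ring
  -- Uniqueness machinery
  have uniq : ∀ (f : ℝ → ℝ) (F : ℝ → ℝ), (∀ t, HasDerivAt f (F t - f t) t) →
      (∀ t, f (t + 2*π) = f t) →
      ∀ b : ℝ → ℝ, (∀ t, HasDerivAt b (F t - b t) t) → (∀ t, b (t + 2*π) = b t) → b = f := by
    intro f F hf hfp b hb hbp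
    have hz := stmt16_zero_lemma (fun t => b t - f t)
      (fun t => by
        have := (hb t).sub (hf t)
        have he : (F t - b t) - (F t - f t) = -(b t - f t) := by ring
        rwa [he] at this)
      (fun t => by rw [hbp t, hfp t])
    funext t
    exact sub_eq_zero.mp (hz t)
  refine ⟨h1, h2, h3, ?_, ?_⟩
  · intro b hb hbp
    exact uniq (a 2) sin h3 (h2 2 le_rfl) b hb hbp
  · intro n hn
    obtain ⟨m, rfl⟩ : ∃ m, n = m + 1 := ⟨n - 1, by omega⟩
    have hm : 2 ≤ m := by omega
    obtain ⟨C, hC⟩ : ∃ C : ℝ, C = ((m.factorial : ℝ)) / (2:ℝ) ^ ((m:ℝ)/2) := ⟨_, rfl⟩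
    obtain ⟨θ, hθ⟩ : ∃ θ : ℝ, θ = (m:ℝ) * π / 4 := ⟨_, rfl⟩
    have hen : a (m+1) = fun t => C * Real.sin (t - θ) := by
      funext t
      rw [ha (m+1) (by omega) t, hC, hθ]
      simp only [Nat.add_sub_cancel]
      push_cast
      rw [show ((m:ℝ) + 1 - 1) = (m:ℝ) by ring]
    have hprev : ∀ t, a (m+1-1) t =
        (((m-1).factorial : ℝ)) / (2:ℝ) ^ (((m:ℝ)-1)/2) * Real.sin (t - ((m:ℝ)-1) * π / 4) := by
      intro t
      have := ha m hm t
      simpa using this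
    have hfac : ((m:ℝ)) * ((m-1).factorial : ℝ) = (m.factorial : ℝ) := by
      obtain ⟨k, rfl⟩ : ∃ k, m = k + 1 := ⟨m - 1, by omega⟩
      simp only [Nat.add_sub_cancel, Nat.factorial_succ]
      push_cast
      ring
    have hpow : (2:ℝ) ^ ((m:ℝ)/2) = (2:ℝ) ^ (((m:ℝ)-1)/2) * Real.sqrt 2 := by
      rw [Real.sqrt_eq_rpow, ← Real.rpow_add (by norm_num : (0:ℝ) < 2)]
      ring_nf
    have hppos : (0:ℝ) < (2:ℝ) ^ (((m:ℝ)-1)/2) := Real.rpow_pos_of_pos (by norm_num) _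
    have hkey : ∀ t, (((m+1 : ℕ) : ℝ) - 1) * a (m+1-1) t - a (m+1) t
        = C * Real.cos (t - θ) := by
      intro t
      rw [hprev t]
      simp only [hen]
      push_cast
      have hsin : Real.sin (t - ((m:ℝ)-1) * π / 4) =
          (Real.sqrt 2 / 2) * (Real.sin (t - θ) + Real.cos (t - θ)) := by
        rw [show t - ((m:ℝ)-1) * π / 4 = (t - θ) + π/4 by rw [hθ]; ring, Real.sin_add,
          Real.sin_pi_div_four, Real.cos_pi_div_four]
        ring
      rw [hsin, hC, hpow, ← hfac]
      have hne1 : ((2:ℝ) ^ (((m:ℝ)-1)/2)) ≠ 0 := ne_of_gt hppos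
      have hne2 : Real.sqrt 2 ≠ 0 := ne_of_gt sqrt2_pos
      generalize hP : ((2:ℝ) ^ (((m:ℝ)-1)/2)) = P at hne1 ⊢
      field_simp
      linear_combination ((m:ℝ) * (Real.sin (t - θ) + Real.cos (t - θ))) * sqrt2_sq
    have hder : ∀ t, HasDerivAt (a (m+1))
        ((((m+1 : ℕ) : ℝ) - 1) * a (m+1-1) t - a (m+1) t) t := by
      intro t
      rw [hkey t, hen]
      exact stmt16_deriv_helper C θ t
    exact ⟨hder, fun b hb hbp => uniq (a (m+1))
      (fun t => (((m+1 : ℕ) : ℝ) - 1) * a (m+1-1) t) hder (h2 (m+1) (by omega)) b hb hbp⟩
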